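/- arXiv:2512.22033 — 2 statements merged into one kernel-verified Lean document; each statement's English description precedes it below -/
import Mathlib

section
/- For all m, n ≥ 3, the direct product graph K_m × C_n admits a self-identifying code. -/
open SimpleGraph Set

/-- Closed neighborhood of a vertex. -/
def cNbr {V : Type*} (G : SimpleGraph V) (v : V) : Set V := insert v (G.neighborSet v)

/-- `S` is a self-identifying code of `G`. -/
def IsSID {V : Type*} (G : SimpleGraph V) (S : Set V) : Prop :=
  S.Nonempty ∧ ∀ v : V, (cNbr G v ∩ S).Nonempty ∧
    (⋂ c ∈ cNbr G v ∩ S, cNbr G c) = {v}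

/-- Minimum cardinality of a self-identifying code. -/
noncomputable def gammaSID {V : Type*} (G : SimpleGraph V) : ℕ :=
  sInf {k | ∃ S : Set V, IsSID G S ∧ S.ncard = k}

/-- Direct product of the complete graph `K_m` with the path `P_n`. -/
def KmPn (m n : ℕ) : SimpleGraph (Fin m × Fin n) where
  Adj u w := u.1 ≠ w.1 ∧ ((u.2 : ℕ) + 1 = (w.2 : ℕ) ∨ (w.2 : ℕ) + 1 = (u.2 : ℕ))
  symm := ⟨fun u w h => ⟨h.1.symm, h.2.symm⟩⟩
  loopless := ⟨fun u h => h.1 rfl⟩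

/-- Direct product of the complete graph `K_m` with the cycle `C_n`. -/
def KmCn (m n : ℕ) : SimpleGraph (Fin m × ZMod n) where
  Adj u w := u.1 ≠ w.1 ∧ (u.2 + 1 = w.2 ∨ w.2 + 1 = u.2)
  symm := ⟨fun u w h => ⟨h.1.symm, h.2.symm⟩⟩
  loopless := ⟨fun u h => h.1 rfl⟩


lemma exists_third {m : ℕ} (hm : 3 ≤ m) (a c : Fin m) : ∃ b : Fin m, b ≠ a ∧ b ≠ c := by
  by_contra h
  push_neg at h
  have hsub : (Finset.univ : Finset (Fin m)) ⊆ {a, c} := fun b _ => by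
    simp only [Finset.mem_insert, Finset.mem_singleton]
    by_cases hb : b = a
    · exact Or.inl hb
    · exact Or.inr (h b hb)
  have h1 := Finset.card_le_card hsub
  have h2 : ({a, c} : Finset (Fin m)).card ≤ 2 :=
    (Finset.card_insert_le _ _).trans (by simp)
  rw [Finset.card_univ, Fintype.card_fin] at h1
  omega

lemma mem_cNbr_KmCn {m n : ℕ} (u w : Fin m × ZMod n) :
    w ∈ cNbr (KmCn m n) u ↔ w = u ∨ (u.1 ≠ w.1 ∧ (u.2 + 1 = w.2 ∨ w.2 + 1 = u.2)) := by
  simp [cNbr, KmCn, SimpleGraph.mem_neighborSet]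

theorem stmt6 (m n : ℕ) (hm : 3 ≤ m) (hn : 3 ≤ n) :
    ∃ S : Set (Fin m × ZMod n), IsSID (KmCn m n) S := by
  haveI : Fact (1 < n) := ⟨by omega⟩
  refine ⟨Set.univ, ⟨⟨(⟨0, by omega⟩, 0), trivial⟩, fun v => ?_⟩⟩
  refine ⟨⟨v, Set.mem_insert _ _, trivial⟩, ?_⟩
  ext w
  simp only [Set.mem_iInter, Set.mem_inter_iff, Set.mem_univ, and_true,
    Set.mem_singleton_iff]
  constructor
  · intro hw
    obtain ⟨a, i⟩ := v
    obtain ⟨b, hba, hbw⟩ := exists_third hm a w.1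
    by_contra hne
    -- w ∈ cNbr v
    have h3 := (mem_cNbr_KmCn _ _).1 (hw (a, i) (Set.mem_insert _ _))
    rcases h3 with h3 | ⟨-, h3⟩
    · exact hne h3
    -- (b, i+1) is a neighbor of (a,i)
    have hc1 : ((b, i+1) : Fin m × ZMod n) ∈ cNbr (KmCn m n) (a, i) := by
      rw [mem_cNbr_KmCn]
      exact Or.inr ⟨hba.symm, Or.inl rfl⟩
    have hc2 : ((b, i-1) : Fin m × ZMod n) ∈ cNbr (KmCn m n) (a, i) := by
      rw [mem_cNbr_KmCn]
      exact Or.inr ⟨hba.symm, Or.inr (by ring)⟩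
    have h1 := (mem_cNbr_KmCn _ _).1 (hw (b, i+1) hc1)
    have h2 := (mem_cNbr_KmCn _ _).1 (hw (b, i-1) hc2)
    rcases h1 with h1 | ⟨-, h1⟩
    · exact hbw (by rw [h1])
    rcases h2 with h2 | ⟨-, h2⟩
    · exact hbw (by rw [h2])
    have hone : (1 : ZMod n) ≠ 0 := one_ne_zero
    rcases h3 with h3 | h3
    · rcases h1 with h1 | h1
      · exact hone (by linear_combination h1 - h3)
      · exact hone (by linear_combination h3 + h1)
    · rcases h2 with h2 | h2
      · exact hone (by linear_combination h3 + h2)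
      · exact hone (by linear_combination h2 - h3)
  · rintro rfl c hc
    rw [mem_cNbr_KmCn] at hc ⊢
    rcases hc with h | h
    · exact Or.inl h.symm
    · exact Or.inr ⟨h.1.symm, h.2.symm⟩
end

section
/- For all integers m, n ≥ 3, γ^SID(K_m × C_n) ≥ ⌊n/3⌋·(m + 2). -/
open SimpleGraph Set

lemma mem_cNbr {m n : ℕ} (v w : Fin m × ZMod n) :
    w ∈ cNbr (KmCn m n) v ↔ w = v ∨ (v.1 ≠ w.1 ∧ (v.2 + 1 = w.2 ∨ w.2 + 1 = v.2)) := by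
  simp only [cNbr, Set.mem_insert_iff, SimpleGraph.mem_neighborSet]
  rfl

lemma sid_spec {V : Type*} {G : SimpleGraph V} {S : Set V} (hS : IsSID G S) {v u : V}
    (hne : u ≠ v) : ∃ c, c ∈ cNbr G v ∧ c ∈ S ∧ u ∉ cNbr G c := by
  by_contra h
  push_neg at h
  have hu : u ∈ ⋂ c ∈ cNbr G v ∩ S, cNbr G c := by
    rw [Set.mem_iInter₂]
    intro c hc
    exact h c hc.1 hc.2
  rw [(hS.2 v).2] at hu
  exact hne hu

lemma zmodTwoNeZero {n : ℕ} (hn : 3 ≤ n) : (2 : ZMod n) ≠ 0 := by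
  haveI : NeZero n := ⟨by omega⟩
  have h : ((2:ℕ) : ZMod n) = (2 : ZMod n) := by push_cast; ring
  rw [← h, Ne, ZMod.natCast_eq_zero_iff]
  intro h'; have := Nat.le_of_dvd (by norm_num) h'; omega

section Window
open Finset
variable {m n : ℕ} {S : Set (Fin m × ZMod n)}

lemma p1 (hn : 3 ≤ n) (hS : IsSID (KmCn m n) S) (j : ZMod n) (i i' : Fin m) (hii' : i ≠ i') :
    (i, j+1) ∈ S ∨ (i', j) ∈ S ∨ (i', j+2) ∈ S := by
  obtain ⟨c, hcv, hcS, hcu⟩ := sid_spec hS (v := (i, j+1)) (u := (i', j+1))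
    (fun h => hii' (congrArg Prod.fst h).symm)
  rw [mem_cNbr] at hcv
  obtain ⟨r, l⟩ := c
  rcases hcv with h | ⟨hrow, hcol⟩
  · left; exact h ▸ hcS
  · dsimp only at hrow hcol
    rcases hcol with h | h
    · by_cases hri : r = i'
      · right; right
        have hl : l = j + 2 := by linear_combination -h
        rw [hri, hl] at hcS; exact hcS
      · exfalso; apply hcu
        rw [mem_cNbr]
        right
        constructor
        · show r ≠ i'
          exact hri
        · right
          show (j + 1) + 1 = l
          exact h
    · by_cases hri : r = i'
      · right; left
        have hl : l = j := by linear_combination h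
        rw [hri, hl] at hcS; exact hcS
      · exfalso; apply hcu
        rw [mem_cNbr]
        right
        constructor
        · show r ≠ i'
          exact hri
        · left
          show l + 1 = j + 1
          exact h

lemma p2 (hn : 3 ≤ n) (hS : IsSID (KmCn m n) S) (j : ZMod n) (i : Fin m) :
    (i, j+1) ∈ S ∨ ∃ r, r ≠ i ∧ (r, j+2) ∈ S := by
  obtain ⟨c, hcv, hcS, hcu⟩ := sid_spec hS (v := (i, j+1)) (u := (i, j-1))
    (by intro h
        apply zmodTwoNeZero hn
        have h2 : j - 1 = j + 1 := congrArg Prod.snd h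
        linear_combination -h2)
  rw [mem_cNbr] at hcv
  obtain ⟨r, l⟩ := c
  rcases hcv with h | ⟨hrow, hcol⟩
  · left; exact h ▸ hcS
  · dsimp only at hrow hcol
    rcases hcol with h | h
    · right
      have hl : l = j + 2 := by linear_combination -h
      rw [hl] at hcS
      exact ⟨r, fun hh => hrow hh.symm, hcS⟩
    · exfalso; apply hcu
      rw [mem_cNbr]
      right
      constructor
      · show r ≠ i
        exact fun hh => hrow hh.symm
      · right
        show (j - 1) + 1 = l
        have hl : l = j := by linear_combination h
        rw [hl]; ring

lemma p3 (hn : 3 ≤ n) (hS : IsSID (KmCn m n) S) (j : ZMod n) (i : Fin m) :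
    (i, j+1) ∈ S ∨ ∃ r, r ≠ i ∧ (r, j) ∈ S := by
  obtain ⟨c, hcv, hcS, hcu⟩ := sid_spec hS (v := (i, j+1)) (u := (i, j+3))
    (by intro h
        apply zmodTwoNeZero hn
        have h2 : j + 3 = j + 1 := congrArg Prod.snd h
        linear_combination h2)
  rw [mem_cNbr] at hcv
  obtain ⟨r, l⟩ := c
  rcases hcv with h | ⟨hrow, hcol⟩
  · left; exact h ▸ hcS
  · dsimp only at hrow hcol
    rcases hcol with h | h
    · exfalso; apply hcu
      rw [mem_cNbr]
      right
      constructor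
      · show r ≠ i
        exact fun hh => hrow hh.symm
      · left
        show l + 1 = j + 3
        linear_combination -h
    · right
      have hl : l = j := by linear_combination h
      rw [hl] at hcS
      exact ⟨r, fun hh => hrow hh.symm, hcS⟩

lemma p4 (hn : 3 ≤ n) (hS : IsSID (KmCn m n) S) (j : ZMod n) (i : Fin m) :
    (i, j) ∈ S ∨ ∃ r, r ≠ i ∧ (r, j+1) ∈ S := by
  obtain ⟨c, hcv, hcS, hcu⟩ := sid_spec hS (v := (i, j)) (u := (i, j-2))
    (by intro h
        apply zmodTwoNeZero hn
        have h2 : j - 2 = j := congrArg Prod.snd h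
        linear_combination -h2)
  rw [mem_cNbr] at hcv
  obtain ⟨r, l⟩ := c
  rcases hcv with h | ⟨hrow, hcol⟩
  · left; exact h ▸ hcS
  · dsimp only at hrow hcol
    rcases hcol with h | h
    · right
      have hl : l = j + 1 := by linear_combination -h
      rw [hl] at hcS
      exact ⟨r, fun hh => hrow hh.symm, hcS⟩
    · exfalso; apply hcu
      rw [mem_cNbr]
      right
      constructor
      · show r ≠ i
        exact fun hh => hrow hh.symm
      · right
        show (j - 2) + 1 = l
        have hl : l = j - 1 := by linear_combination h
        rw [hl]; ring

lemma p5 (hn : 3 ≤ n) (hS : IsSID (KmCn m n) S) (j : ZMod n) (i : Fin m) :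
    (i, j+2) ∈ S ∨ ∃ r, r ≠ i ∧ (r, j+1) ∈ S := by
  obtain ⟨c, hcv, hcS, hcu⟩ := sid_spec hS (v := (i, j+2)) (u := (i, j+4))
    (by intro h
        apply zmodTwoNeZero hn
        have h2 : j + 4 = j + 2 := congrArg Prod.snd h
        linear_combination h2)
  rw [mem_cNbr] at hcv
  obtain ⟨r, l⟩ := c
  rcases hcv with h | ⟨hrow, hcol⟩
  · left; exact h ▸ hcS
  · dsimp only at hrow hcol
    rcases hcol with h | h
    · exfalso; apply hcu
      rw [mem_cNbr]
      right
      constructor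
      · show r ≠ i
        exact fun hh => hrow hh.symm
      · left
        show l + 1 = j + 4
        linear_combination -h
    · right
      have hl : l = j + 1 := by linear_combination h
      rw [hl] at hcS
      exact ⟨r, fun hh => hrow hh.symm, hcS⟩

lemma p6 (hn : 3 ≤ n) (hS : IsSID (KmCn m n) S) (j : ZMod n) (i i' : Fin m) (hii' : i ≠ i') :
    (∃ r, r ≠ i ∧ r ≠ i' ∧ (r, j) ∈ S) ∨ (∃ r, r ≠ i ∧ (r, j+2) ∈ S) := by
  obtain ⟨c, hcv, hcS, hcu⟩ := sid_spec hS (v := (i, j+1)) (u := (i', j))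
    (by intro h
        exact hii' (congrArg Prod.fst h).symm)
  rw [mem_cNbr] at hcv
  obtain ⟨r, l⟩ := c
  rcases hcv with h | ⟨hrow, hcol⟩
  · -- c = v = (i, j+1); but v ∈ cNbr u, contradiction
    exfalso; apply hcu
    rw [h, mem_cNbr]
    right
    refine ⟨hii', Or.inr ?_⟩
    show j + 1 = j + 1
    rfl
  · dsimp only at hrow hcol
    rcases hcol with h | h
    · right
      have hl : l = j + 2 := by linear_combination -h
      rw [hl] at hcS
      exact ⟨r, fun hh => hrow hh.symm, hcS⟩
    · -- l = j; r ≠ i' since otherwise c = u ∈ cNbr u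
      left
      have hl : l = j := by linear_combination h
      refine ⟨r, fun hh => hrow hh.symm, ?_, by rw [hl] at hcS; exact hcS⟩
      intro hri
      apply hcu
      rw [mem_cNbr]
      left
      rw [hri, hl]

lemma p7 (hn : 3 ≤ n) (hS : IsSID (KmCn m n) S) (j : ZMod n) (i i' : Fin m) (hii' : i ≠ i') :
    (∃ r, r ≠ i ∧ r ≠ i' ∧ (r, j+2) ∈ S) ∨ (∃ r, r ≠ i ∧ (r, j) ∈ S) := by
  obtain ⟨c, hcv, hcS, hcu⟩ := sid_spec hS (v := (i, j+1)) (u := (i', j+2))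
    (by intro h
        exact hii' (congrArg Prod.fst h).symm)
  rw [mem_cNbr] at hcv
  obtain ⟨r, l⟩ := c
  rcases hcv with h | ⟨hrow, hcol⟩
  · exfalso; apply hcu
    rw [h, mem_cNbr]
    right
    refine ⟨hii', Or.inl ?_⟩
    show (j + 1) + 1 = j + 2
    ring
  · dsimp only at hrow hcol
    rcases hcol with h | h
    · left
      have hl : l = j + 2 := by linear_combination -h
      refine ⟨r, fun hh => hrow hh.symm, ?_, by rw [hl] at hcS; exact hcS⟩
      intro hri
      apply hcu
      rw [mem_cNbr]
      left
      rw [hri, hl]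
    · right
      have hl : l = j := by linear_combination h
      rw [hl] at hcS
      exact ⟨r, fun hh => hrow hh.symm, hcS⟩



lemma comb {m : ℕ} (hm : 3 ≤ m) (A B C : Finset (Fin m))
    (h1 : ∀ i i' : Fin m, i ≠ i' → i ∈ B ∨ i' ∈ A ∨ i' ∈ C)
    (h2 : ∀ i : Fin m, i ∈ B ∨ ∃ r, r ≠ i ∧ r ∈ C)
    (h3 : ∀ i : Fin m, i ∈ B ∨ ∃ r, r ≠ i ∧ r ∈ A)
    (h4 : ∀ i : Fin m, i ∈ A ∨ ∃ r, r ≠ i ∧ r ∈ B)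
    (h5 : ∀ i : Fin m, i ∈ C ∨ ∃ r, r ≠ i ∧ r ∈ B)
    (h6 : ∀ i i' : Fin m, i ≠ i' → (∃ r, r ≠ i ∧ r ≠ i' ∧ r ∈ A) ∨ (∃ r, r ≠ i ∧ r ∈ C))
    (h7 : ∀ i i' : Fin m, i ≠ i' → (∃ r, r ≠ i ∧ r ≠ i' ∧ r ∈ C) ∨ (∃ r, r ≠ i ∧ r ∈ A)) :
    m + 2 ≤ A.card + B.card + C.card := by
  classical
  have hcu : (Finset.univ : Finset (Fin m)).card = m := by simp
  -- two distinct elements different from any given element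
  have hpair : ∀ x : Fin m, ∃ p q : Fin m, p ≠ q ∧ p ≠ x ∧ q ≠ x := by
    intro x
    have hcard : 1 < (Finset.univ.erase x).card := by
      rw [Finset.card_erase_of_mem (Finset.mem_univ x), hcu]; omega
    obtain ⟨p, hp, q, hq, hpq⟩ := Finset.one_lt_card.mp hcard
    exact ⟨p, q, hpq, Finset.ne_of_mem_erase hp, Finset.ne_of_mem_erase hq⟩
  by_cases hB : B = Finset.univ
  · -- B is everything; show 2 ≤ A.card + C.card
    have key : 2 ≤ A.card + C.card := by
      by_contra hlt
      push_neg at hlt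
      have hA1 : A.card ≤ 1 := by omega
      have hC1 : C.card ≤ 1 := by omega
      rcases A.eq_empty_or_nonempty with hA | ⟨x, hx⟩
      · rcases C.eq_empty_or_nonempty with hC | ⟨x, hx⟩
        · obtain ⟨p, q, hpq, -, -⟩ := hpair ⟨0, by omega⟩
          rcases h6 p q hpq with ⟨r, -, -, hr⟩ | ⟨r, -, hr⟩ <;>
            simp [hA, hC] at hr
        · obtain ⟨p, q, hpq, hpx, -⟩ := hpair x
          rcases h7 p x (hpx) with ⟨r, hri, hrx, hrC⟩ | ⟨r, -, hrA⟩
          · exact hrx (Finset.card_le_one.mp hC1 _ hrC _ hx)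
          · simp [hA] at hrA
      · have hC : C = ∅ := by
          have : 1 ≤ A.card := Finset.card_pos.mpr ⟨x, hx⟩
          exact Finset.card_eq_zero.mp (by omega)
        obtain ⟨p, q, hpq, hpx, -⟩ := hpair x
        rcases h6 p x hpx with ⟨r, hri, hrx, hrA⟩ | ⟨r, -, hrC⟩
        · exact hrx (Finset.card_le_one.mp hA1 _ hrA _ hx)
        · simp [hC] at hrC
    have : B.card = m := by rw [hB, hcu]
    omega
  · obtain ⟨i0, hi0⟩ : ∃ i0, i0 ∉ B := by
      by_contra h; push_neg at h; exact hB (Finset.eq_univ_iff_forall.mpr h)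
    by_cases hz1 : ∀ i i' : Fin m, i ∉ B → i' ∉ B → i = i'
    · -- exactly one element outside B
      have hBsub : Finset.univ.erase i0 ⊆ B := by
        intro i hi
        by_contra hiB
        exact Finset.ne_of_mem_erase hi (hz1 i i0 hiB hi0)
      have hBcard : m - 1 ≤ B.card := by
        have := Finset.card_le_card hBsub
        rw [Finset.card_erase_of_mem (Finset.mem_univ i0), hcu] at this
        omega
      have hAC : ∀ i', i' ≠ i0 → i' ∈ A ∨ i' ∈ C := by
        intro i' hne
        rcases h1 i0 i' (Ne.symm hne) with h | h
        · exact absurd h hi0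
        · exact h
      obtain ⟨p, q, hpq, hpi0, hqi0⟩ := hpair i0
      have two_mem : ∀ x y : Fin m, x ≠ y → x ∈ A → y ∈ A → 2 ≤ A.card := by
        intro x y hxy hx hy
        exact Finset.one_lt_card.mpr ⟨x, hx, y, hy, hxy⟩
      have two_memC : ∀ x y : Fin m, x ≠ y → x ∈ C → y ∈ C → 2 ≤ C.card := by
        intro x y hxy hx hy
        exact Finset.one_lt_card.mpr ⟨x, hx, y, hy, hxy⟩
      have key : 3 ≤ A.card + C.card := by
        have hCpos : ∀ x : Fin m, x ∈ C → 1 ≤ C.card := fun x hx => Finset.card_pos.mpr ⟨x, hx⟩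
        have hApos : ∀ x : Fin m, x ∈ A → 1 ≤ A.card := fun x hx => Finset.card_pos.mpr ⟨x, hx⟩
        rcases hAC p hpi0 with hpA | hpC <;> rcases hAC q hqi0 with hqA | hqC
        · -- both in A
          rcases h2 i0 with h | ⟨r, hr, hrC⟩
          · exact absurd h hi0
          · have := two_mem p q hpq hpA hqA
            have := hCpos r hrC
            omega
        · -- p ∈ A, q ∈ C
          rcases h6 q p (Ne.symm hpq) with ⟨r, hrq, hrp, hrA⟩ | ⟨r, hrq, hrC⟩
          · have := two_mem r p hrp hrA hpA
            have := hCpos q hqC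
            omega
          · have := two_memC r q hrq hrC hqC
            have := hApos p hpA
            omega
        · -- p ∈ C, q ∈ A
          rcases h6 p q hpq with ⟨r, hrp, hrq, hrA⟩ | ⟨r, hrp, hrC⟩
          · have := two_mem r q hrq hrA hqA
            have := hCpos p hpC
            omega
          · have := two_memC r p hrp hrC hpC
            have := hApos q hqA
            omega
        · -- both in C
          rcases h3 i0 with h | ⟨r, hr, hrA⟩
          · exact absurd h hi0
          · have := two_memC p q hpq hpC hqC
            have := hApos r hrA
            omega
      omega
    · -- at least two elements outside B
      push_neg at hz1
      obtain ⟨i0', i1, hi0', hi1, hne01⟩ := hz1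
      have hAC : ∀ i', i' ∈ A ∨ i' ∈ C := by
        intro i'
        by_cases h : i' = i0'
        · rcases h1 i1 i' (by rw [h]; exact (Ne.symm hne01)) with hh | hh
          · exact absurd hh hi1
          · exact hh
        · rcases h1 i0' i' (Ne.symm h) with hh | hh
          · exact absurd hh hi0'
          · exact hh
      have hACcard : m ≤ A.card + C.card := by
        have hsub : Finset.univ ⊆ A ∪ C := by
          intro i _
          rcases hAC i with h | h
          · exact Finset.mem_union_left _ h
          · exact Finset.mem_union_right _ h
        have h1' := Finset.card_le_card hsub
        have h2' := Finset.card_union_le A C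
        rw [hcu] at h1'
        omega
      rcases B.eq_empty_or_nonempty with hB0 | ⟨p, hp⟩
      · -- B empty: A and C are everything
        have hAall : ∀ i, i ∈ A := by
          intro i
          rcases h4 i with h | ⟨r, -, hr⟩
          · exact h
          · simp [hB0] at hr
        have hCall : ∀ i, i ∈ C := by
          intro i
          rcases h5 i with h | ⟨r, -, hr⟩
          · exact h
          · simp [hB0] at hr
        have : A = Finset.univ := Finset.eq_univ_iff_forall.mpr hAall
        have hA' : A.card = m := by rw [this, hcu]
        have : C = Finset.univ := Finset.eq_univ_iff_forall.mpr hCall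
        have hC' : C.card = m := by rw [this, hcu]
        omega
      · by_cases hp1 : ∀ r ∈ B, r = p
        · -- B = {p}
          have hpA : p ∈ A := by
            rcases h4 p with h | ⟨r, hr, hrB⟩
            · exact h
            · exact absurd (hp1 r hrB) hr
          have hpC : p ∈ C := by
            rcases h5 p with h | ⟨r, hr, hrB⟩
            · exact h
            · exact absurd (hp1 r hrB) hr
          have hinter : 1 ≤ (A ∩ C).card :=
            Finset.card_pos.mpr ⟨p, Finset.mem_inter.mpr ⟨hpA, hpC⟩⟩
          have huc : (A ∪ C).card + (A ∩ C).card = A.card + C.card :=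
            Finset.card_union_add_card_inter A C
          have hsub : Finset.univ ⊆ A ∪ C := by
            intro i _
            rcases hAC i with h | h
            · exact Finset.mem_union_left _ h
            · exact Finset.mem_union_right _ h
          have h1' := Finset.card_le_card hsub
          rw [hcu] at h1'
          have hBpos : 1 ≤ B.card := Finset.card_pos.mpr ⟨p, hp⟩
          omega
        · push_neg at hp1
          obtain ⟨q, hq, hqp⟩ := hp1
          have : 2 ≤ B.card := Finset.one_lt_card.mpr ⟨p, hp, q, hq, Ne.symm hqp⟩
          omega


open scoped Classical in
lemma window {m n : ℕ} {S : Set (Fin m × ZMod n)} (hm : 3 ≤ m) (hn : 3 ≤ n)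
    (hS : IsSID (KmCn m n) S) (j : ZMod n) :
    m + 2 ≤ (Finset.univ.filter fun i : Fin m => (i, j) ∈ S).card
      + (Finset.univ.filter fun i : Fin m => (i, j+1) ∈ S).card
      + (Finset.univ.filter fun i : Fin m => (i, j+2) ∈ S).card := by
  apply comb hm
  · intro i i' hii'
    simp only [Finset.mem_filter, Finset.mem_univ, true_and]
    exact p1 hn hS j i i' hii'
  · intro i
    simp only [Finset.mem_filter, Finset.mem_univ, true_and]
    exact p2 hn hS j i
  · intro i
    simp only [Finset.mem_filter, Finset.mem_univ, true_and]
    exact p3 hn hS j i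
  · intro i
    simp only [Finset.mem_filter, Finset.mem_univ, true_and]
    exact p4 hn hS j i
  · intro i
    simp only [Finset.mem_filter, Finset.mem_univ, true_and]
    exact p5 hn hS j i
  · intro i i' hii'
    simp only [Finset.mem_filter, Finset.mem_univ, true_and]
    exact p6 hn hS j i i' hii'
  · intro i i' hii'
    simp only [Finset.mem_filter, Finset.mem_univ, true_and]
    exact p7 hn hS j i i' hii'

open scoped Classical in
lemma total_bound {m n : ℕ} {S : Set (Fin m × ZMod n)} (hm : 3 ≤ m) (hn : 3 ≤ n)
    (hS : IsSID (KmCn m n) S) : n / 3 * (m + 2) ≤ S.ncard := by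
  haveI : NeZero n := ⟨by omega⟩
  set T := S.toFinset with hT
  have hnc : S.ncard = T.card := Set.ncard_eq_toFinset_card' S
  -- column counts agree
  have colEq : ∀ jz : ZMod n, (T.filter fun p => p.2 = jz).card
      = (Finset.univ.filter fun i : Fin m => (i, jz) ∈ S).card := by
    intro jz
    have himg : T.filter (fun p => p.2 = jz)
        = (Finset.univ.filter fun i : Fin m => (i, jz) ∈ S).image (fun i => (i, jz)) := by
      ext ⟨a, b⟩
      simp only [Finset.mem_filter, Finset.mem_image, Finset.mem_univ, true_and, hT,
        Set.mem_toFinset]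
      constructor
      · rintro ⟨haS, hb⟩
        exact ⟨a, by rw [← hb]; exact haS, by rw [hb]⟩
      · rintro ⟨i, hiS, heq⟩
        obtain ⟨h1, h2⟩ := Prod.mk.injEq .. ▸ heq
        exact ⟨by rw [← h1, ← h2]; exact hiS, h2.symm⟩
    rw [himg, Finset.card_image_of_injective _ (fun x y h => (Prod.ext_iff.mp h).1)]
  -- window sums
  have key : ∀ q : ℕ, q * (m + 2) ≤ ∑ t ∈ Finset.range (3 * q),
      (Finset.univ.filter fun i : Fin m => (i, (t : ZMod n)) ∈ S).card := by
    intro q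
    induction q with
    | zero => simp
    | succ q ih =>
      have h3 : 3 * (q + 1) = (3 * q + 1 + 1) + 1 := by ring
      rw [h3, Finset.sum_range_succ, Finset.sum_range_succ, Finset.sum_range_succ]
      have hw := window hm hn hS ((3 * q : ℕ) : ZMod n)
      have c1 : ((3 * q + 1 : ℕ) : ZMod n) = ((3 * q : ℕ) : ZMod n) + 1 := by push_cast; ring
      have c2 : ((3 * q + 1 + 1 : ℕ) : ZMod n) = ((3 * q : ℕ) : ZMod n) + 2 := by push_cast; ring
      rw [c1, c2]
      have hq : (q + 1) * (m + 2) = q * (m + 2) + (m + 2) := by ring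
      rw [hq]
      linarith
  -- disjoint fibers inside T
  have hdisj : ∀ t ∈ Finset.range (3 * (n / 3)), ∀ t' ∈ Finset.range (3 * (n / 3)), t ≠ t' →
      Disjoint (T.filter fun p => p.2 = ((t : ℕ) : ZMod n))
        (T.filter fun p => p.2 = ((t' : ℕ) : ZMod n)) := by
    intro t ht t' ht' hne
    rw [Finset.disjoint_left]
    intro p hp hp'
    simp only [Finset.mem_filter] at hp hp'
    apply hne
    have hlt : t < n := by have := Finset.mem_range.mp ht; omega
    have hlt' : t' < n := by have := Finset.mem_range.mp ht'; omega
    have h1 := ZMod.val_cast_of_lt hlt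
    have h2 := ZMod.val_cast_of_lt hlt'
    rw [← h1, ← h2, ← hp.2, ← hp'.2]
  have hbiu : ∑ t ∈ Finset.range (3 * (n / 3)), (T.filter fun p => p.2 = ((t : ℕ) : ZMod n)).card
      = ((Finset.range (3 * (n / 3))).biUnion fun t => T.filter fun p => p.2 = ((t : ℕ) : ZMod n)).card :=
    (Finset.card_biUnion hdisj).symm
  have hsubT : ((Finset.range (3 * (n / 3))).biUnion fun t =>
      T.filter fun p => p.2 = ((t : ℕ) : ZMod n)) ⊆ T := by
    apply Finset.biUnion_subset.mpr
    intro t _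
    exact Finset.filter_subset _ _
  calc n / 3 * (m + 2)
      ≤ ∑ t ∈ Finset.range (3 * (n / 3)),
        (Finset.univ.filter fun i : Fin m => (i, (t : ZMod n)) ∈ S).card := key (n / 3)
    _ = ∑ t ∈ Finset.range (3 * (n / 3)), (T.filter fun p => p.2 = ((t : ℕ) : ZMod n)).card := by
        apply Finset.sum_congr rfl
        intro t _
        exact (colEq _).symm
    _ = ((Finset.range (3 * (n / 3))).biUnion fun t =>
        T.filter fun p => p.2 = ((t : ℕ) : ZMod n)).card := hbiu
    _ ≤ T.card := Finset.card_le_card hsubT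
    _ = S.ncard := hnc.symm

lemma univ_isSID {m n : ℕ} (hm : 3 ≤ m) (hn : 3 ≤ n) :
    IsSID (KmCn m n) (Set.univ : Set (Fin m × ZMod n)) := by
  haveI : NeZero n := ⟨by omega⟩
  refine ⟨⟨(⟨0, by omega⟩, 0), trivial⟩, fun v => ⟨⟨v, (mem_cNbr v v).mpr (Or.inl rfl), trivial⟩, ?_⟩⟩
  refine Set.eq_singleton_iff_unique_mem.mpr ⟨?_, ?_⟩
  · rw [Set.mem_iInter₂]
    rintro c ⟨hc, -⟩
    rw [mem_cNbr] at hc ⊢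
    rcases hc with h | ⟨h1, h2⟩
    · left; exact h.symm
    · right
      exact ⟨h1.symm, Or.symm h2⟩
  · intro u hu
    rw [Set.mem_iInter₂] at hu
    have huv : ∀ c, c ∈ cNbr (KmCn m n) v → u ∈ cNbr (KmCn m n) c :=
      fun c hc => hu c ⟨hc, trivial⟩
    by_contra hne
    obtain ⟨i, k⟩ := v
    obtain ⟨i', l⟩ := u
    have h0 := huv (i, k) ((mem_cNbr _ _).mpr (Or.inl rfl))
    rw [mem_cNbr] at h0
    rcases h0 with h | ⟨hrow, hcol⟩
    · exact hne h
    · dsimp only at hrow hcol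
      rcases hcol with h | h
      · -- l = k + 1; take c = (i', k - 1)
        have hc := huv (i', k - 1) (by
          rw [mem_cNbr]
          right
          refine ⟨hrow, Or.inr ?_⟩
          show (k - 1) + 1 = k
          ring)
        rw [mem_cNbr] at hc
        rcases hc with hh | ⟨hh, -⟩
        · have : l = k - 1 := congrArg Prod.snd hh
          apply zmodTwoNeZero hn
          linear_combination h + this
        · exact hh rfl
      · -- l + 1 = k; take c = (i', k + 1)
        have hc := huv (i', k + 1) (by
          rw [mem_cNbr]
          right
          exact ⟨hrow, Or.inl rfl⟩)
        rw [mem_cNbr] at hc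
        rcases hc with hh | ⟨hh, -⟩
        · have : l = k + 1 := congrArg Prod.snd hh
          apply zmodTwoNeZero hn
          linear_combination h - this
        · exact hh rfl

theorem stmt16 (m n : ℕ) (hm : 3 ≤ m) (hn : 3 ≤ n) :
    n / 3 * (m + 2) ≤ gammaSID (KmCn m n) := by
  have hne : {k | ∃ S : Set (Fin m × ZMod n), IsSID (KmCn m n) S ∧ S.ncard = k}.Nonempty :=
    ⟨(Set.univ : Set (Fin m × ZMod n)).ncard, Set.univ, univ_isSID hm hn, rfl⟩
  obtain ⟨S, hS, hcard⟩ := Nat.sInf_mem hne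
  calc n / 3 * (m + 2) ≤ S.ncard := total_bound hm hn hS
    _ = gammaSID (KmCn m n) := hcard
end Window
end
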